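/- Define P_n(x,t) = ∑_{j=0}^{n} (−t)^{n−j}·C(n,j)·C(n+j,j)·x^j for n ≥ 0 and real x, t. Then for all n ≥ 0 and all real x, t: (n+2)·P_{n+2}(x,t) − (2x − t)·(2n+3)·P_{n+1}(x,t) + t²·(n+1)·P_n(x,t) = 0, with P_0(x,t) = 1 and P_1(x,t) = 2x − t. -/

import Mathlib

/-- `P_n(x,t) = ∑_{j=0}^n (−t)^{n−j}·C(n,j)·C(n+j,j)·x^j` (shifted Legendre polynomials for
`t = 1`). -/
noncomputable def shiftedLegendre (n : ℕ) (x t : ℝ) : ℝ :=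
  ∑ j ∈ Finset.range (n + 1),
    (-t) ^ (n - j) * (Nat.choose n j : ℝ) * (Nat.choose (n + j) j : ℝ) * x ^ j

lemma ch (a b c : ℕ) (h : b + c = a) :
    (Nat.choose a b : ℝ) = (Nat.factorial a : ℝ) / (Nat.factorial b * Nat.factorial c) := by
  subst h
  rw [Nat.cast_choose ℝ (Nat.le_add_right _ _), Nat.add_sub_cancel_left]

lemma fstep (a b : ℕ) (h : a = b + 1) :
    (Nat.factorial a : ℝ) = ((b : ℝ) + 1) * (Nat.factorial b : ℝ) := by
  subst h; push_cast [Nat.factorial_succ]; ring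

/-- The coefficient of `x^j` in `P_n(x,t)`. -/
noncomputable def cf (n j : ℕ) (t : ℝ) : ℝ :=
  (-t) ^ (n - j) * (Nat.choose n j : ℝ) * (Nat.choose (n + j) j : ℝ)

lemma sl_ext (n N : ℕ) (h : n + 1 ≤ N) (x t : ℝ) :
    shiftedLegendre n x t = ∑ j ∈ Finset.range N, cf n j t * x ^ j := by
  rw [shiftedLegendre]
  apply Finset.sum_subset (Finset.range_subset_range.mpr h)
  intro j hj hj'
  have : n < j := by simp at hj'; omega
  simp [cf, Nat.choose_eq_zero_of_lt this]

lemma keyc (n j : ℕ) (t : ℝ) :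
    ((n:ℝ)+2) * cf (n+2) (j+1) t + (2*(n:ℝ)+3)*t * cf (n+1) (j+1) t
      + t^2*((n:ℝ)+1) * cf n (j+1) t = 2*(2*(n:ℝ)+3) * cf (n+1) j t := by
  rcases lt_or_ge j n with h | h
  · -- j + 1 ≤ n
    obtain ⟨m, rfl⟩ : ∃ m, n = j + m + 1 := ⟨n - j - 1, by omega⟩
    unfold cf
    rw [show j+m+1+2 - (j+1) = m+2 from by omega,
        show j+m+1+1 - (j+1) = m+1 from by omega,
        show j+m+1 - (j+1) = m from by omega,
        show j+m+1+1 - j = m+2 from by omega]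
    rw [ch (j+m+1+2) (j+1) (m+2) (by omega),
        ch (j+m+1+2+(j+1)) (j+1) (j+m+3) (by omega),
        ch (j+m+1+1) (j+1) (m+1) (by omega),
        ch (j+m+1+1+(j+1)) (j+1) (j+m+2) (by omega),
        ch (j+m+1) (j+1) m (by omega),
        ch (j+m+1+(j+1)) (j+1) (j+m+1) (by omega),
        ch (j+m+1+1) j (m+2) (by omega),
        ch (j+m+1+1+j) j (j+m+2) (by omega)]
    rw [fstep (j+m+1+2) (j+m+2) (by omega),
        fstep (j+m+1+2+(j+1)) (2*j+m+3) (by omega),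
        fstep (j+m+1+1) (j+m+1) (by omega),
        fstep (j+m+1+1+(j+1)) (2*j+m+2) (by omega),
        fstep (j+m+1+(j+1)) (2*j+m+1) (by omega),
        fstep (j+m+1+1+j) (2*j+m+1) (by omega),
        fstep (j+1) j (by omega),
        fstep (m+2) (m+1) (by omega),
        fstep (m+1) m (by omega),
        fstep (2*j+m+3) (2*j+m+2) (by omega),
        fstep (2*j+m+2) (2*j+m+1) (by omega)]
    have h1 : (Nat.factorial j : ℝ) ≠ 0 := by positivity
    have h2 : (Nat.factorial m : ℝ) ≠ 0 := by positivity
    have h3 : (Nat.factorial (j+m+1) : ℝ) ≠ 0 := by positivity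
    have h4 : (Nat.factorial (2*j+m+1) : ℝ) ≠ 0 := by positivity
    push_cast
    field_simp
    ring
  rcases eq_or_lt_of_le h with rfl | h'
  · -- j = n
    unfold cf
    rw [show n+2 - (n+1) = 1 from by omega,
        show n+1 - (n+1) = 0 from by omega,
        show n+1 - n = 1 from by omega,
        Nat.choose_eq_zero_of_lt (show n < n + 1 from by omega)]
    rw [ch (n+2) (n+1) 1 (by omega),
        ch (n+2+(n+1)) (n+1) (n+2) (by omega),
        ch (n+1) (n+1) 0 (by omega),
        ch (n+1+(n+1)) (n+1) (n+1) (by omega),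
        ch (n+1) n 1 (by omega),
        ch (n+1+n) n (n+1) (by omega)]
    rw [fstep (n+2) (n+1) (by omega),
        fstep (n+2+(n+1)) (2*n+2) (by omega),
        fstep (n+1+(n+1)) (2*n+1) (by omega),
        fstep (2*n+2) (2*n+1) (by omega),
        fstep (n+1) n (by omega)]
    have h1 : (Nat.factorial n : ℝ) ≠ 0 := by positivity
    have h4 : (Nat.factorial (2*n+1) : ℝ) ≠ 0 := by positivity
    simp only [Nat.factorial_zero, Nat.factorial_one, Nat.cast_one]
    push_cast
    field_simp
    ring
  rcases eq_or_lt_of_le (Nat.succ_le_of_lt h') with h'' | h''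
  · -- j = n + 1
    obtain rfl : j = n + 1 := by omega
    unfold cf
    rw [show n+2 - (n+1+1) = 0 from by omega,
        show n+1 - (n+1) = 0 from by omega,
        Nat.choose_eq_zero_of_lt (show n+1 < n+1+1 from by omega),
        Nat.choose_eq_zero_of_lt (show n < n+1+1 from by omega)]
    rw [ch (n+2) (n+1+1) 0 (by omega),
        ch (n+2+(n+1+1)) (n+1+1) (n+2) (by omega),
        ch (n+1) (n+1) 0 (by omega),
        ch (n+1+(n+1)) (n+1) (n+1) (by omega)]
    rw [fstep (n+2+(n+1+1)) (2*n+3) (by omega),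
        fstep (2*n+3) (2*n+2) (by omega),
        fstep (n+2) (n+1) (by omega),
        fstep (n+1+(n+1)) (2*n+1) (by omega),
        fstep (2*n+2) (2*n+1) (by omega)]
    have h1 : (Nat.factorial (n+1) : ℝ) ≠ 0 := by positivity
    have h4 : (Nat.factorial (2*n+1) : ℝ) ≠ 0 := by positivity
    simp only [Nat.factorial_zero, Nat.factorial_one, Nat.cast_one]
    push_cast
    field_simp
    ring
  · -- j ≥ n + 2 : everything vanishes
    unfold cf
    rw [Nat.choose_eq_zero_of_lt (show n+2 < j+1 from by omega),
        Nat.choose_eq_zero_of_lt (show n+1 < j+1 from by omega),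
        Nat.choose_eq_zero_of_lt (show n < j+1 from by omega),
        Nat.choose_eq_zero_of_lt (show n+1 < j from by omega)]
    push_cast
    ring

lemma d0 (n : ℕ) (t : ℝ) :
    ((n:ℝ)+2) * cf (n+2) 0 t + (2*(n:ℝ)+3)*t * cf (n+1) 0 t
      + t^2*((n:ℝ)+1) * cf n 0 t = 0 := by
  simp only [cf, Nat.sub_zero, Nat.choose_zero_right, Nat.add_zero, Nat.choose_self,
    Nat.cast_one]
  ring

/-- `(n+2)P_{n+2}(x,t) − (2x−t)(2n+3)P_{n+1}(x,t) + t²(n+1)P_n(x,t) = 0`,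
with `P_0(x,t) = 1` and `P_1(x,t) = 2 x − t`. -/
theorem shiftedLegendre_recurrence :
    (∀ (n : ℕ) (x t : ℝ),
      ((n : ℝ) + 2) * shiftedLegendre (n + 2) x t -
          (2 * x - t) * (2 * (n : ℝ) + 3) * shiftedLegendre (n + 1) x t +
          t ^ 2 * ((n : ℝ) + 1) * shiftedLegendre n x t = 0) ∧
    (∀ x t : ℝ, shiftedLegendre 0 x t = 1 ∧ shiftedLegendre 1 x t = 2 * x - t) := by
  constructor
  · intro n x t
    rw [sl_ext (n+2) (n+3) (by omega) x t, sl_ext (n+1) (n+3) (by omega) x t,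
        sl_ext n (n+3) (by omega) x t]
    have hS : ((n:ℝ)+2) * (∑ j ∈ Finset.range (n+3), cf (n+2) j t * x ^ j)
        + (2*(n:ℝ)+3)*t * (∑ j ∈ Finset.range (n+3), cf (n+1) j t * x ^ j)
        + t^2*((n:ℝ)+1) * (∑ j ∈ Finset.range (n+3), cf n j t * x ^ j)
        = 2*(2*(n:ℝ)+3) * ∑ j ∈ Finset.range (n+3), cf (n+1) j t * x ^ (j+1) := by
      rw [Finset.mul_sum, Finset.mul_sum, Finset.mul_sum, Finset.mul_sum,
        ← Finset.sum_add_distrib, ← Finset.sum_add_distrib]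
      rw [show (n:ℕ)+3 = (n+2)+1 from rfl, Finset.sum_range_succ'
        (fun j => ((n:ℝ)+2) * (cf (n+2) j t * x ^ j)
          + (2*(n:ℝ)+3)*t * (cf (n+1) j t * x ^ j)
          + t^2*((n:ℝ)+1) * (cf n j t * x ^ j)),
        Finset.sum_range_succ (fun j => 2*(2*(n:ℝ)+3) * (cf (n+1) j t * x ^ (j+1)))]
      have hz : cf (n+1) (n+2) t = 0 := by
        simp [cf, Nat.choose_eq_zero_of_lt (show n+1 < n+2 from by omega)]
      rw [hz]
      have h0 : ((n:ℝ)+2) * (cf (n+2) 0 t * x ^ 0)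
          + (2*(n:ℝ)+3)*t * (cf (n+1) 0 t * x ^ 0)
          + t^2*((n:ℝ)+1) * (cf n 0 t * x ^ 0) = 0 := by
        simp only [pow_zero, mul_one]
        linear_combination d0 n t
      rw [h0]
      simp only [mul_zero, zero_mul, add_zero]
      apply Finset.sum_congr rfl
      intro j _
      linear_combination x ^ (j+1) * keyc n j t
    have hexp : (2 * x - t) * (2 * (n:ℝ) + 3) * ∑ j ∈ Finset.range (n+3), cf (n+1) j t * x ^ j
        = 2*(2*(n:ℝ)+3) * (∑ j ∈ Finset.range (n+3), cf (n+1) j t * x ^ (j+1))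
          - (2*(n:ℝ)+3)*t * (∑ j ∈ Finset.range (n+3), cf (n+1) j t * x ^ j) := by
      rw [Finset.mul_sum, Finset.mul_sum, Finset.mul_sum, ← Finset.sum_sub_distrib]
      apply Finset.sum_congr rfl
      intro j _
      rw [pow_succ]
      ring
    rw [hexp]
    linarith [hS]
  · intro x t
    constructor
    · simp [shiftedLegendre]
    · rw [shiftedLegendre]
      rw [Finset.sum_range_succ, Finset.sum_range_succ, Finset.sum_range_zero]
      norm_num
      ring
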